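/- The map F is injective if and only if it is surjective, and F is bijective if and only if every A_i is bijective. (The abstract triangularity principle behind Proposition 6.9(1) of the paper: the map Φ^{X⁰}, which has triangular form Φ_i(X⁰,…,X^i) = A_i^{X⁰}[X^i] + P_i(X⁰,…,X^{i−1}), is injective if and only if it is surjective.) -/

import Mathlib

/-- Fixed-point lemma for triangular assignments: if `c i` depends only on coordinates `< i`,
then there is a vector `x` with `x i = c i x` for all `i`. -/
lemma triangular_exists_fixed {N : ℕ} {U : Fin N → Type*} [∀ i, Inhabited (U i)]
    (c : ∀ i, (∀ j, U j) → U i)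
    (hc : ∀ i : Fin N, ∀ x y : ∀ j, U j, (∀ j : Fin N, j < i → x j = y j) → c i x = c i y) :
    ∃ x : ∀ i, U i, ∀ i, x i = c i x := by
  let seq : ℕ → ∀ i, U i := fun n =>
    Nat.rec (fun _ => default) (fun _ prev => fun i => c i prev) n
  have hstep : ∀ n i, seq (n + 1) i = c i (seq n) := fun n i => rfl
  have hstable : ∀ n, ∀ j : Fin N, (j : ℕ) < n → seq n j = seq (n + 1) j := by
    intro n
    induction n with
    | zero => intro j h; omega
    | succ n ih =>
      intro j hj
      show c j (seq n) = c j (seq (n + 1))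
      exact hc j _ _ (fun l hl => ih l (by
        have : (l : ℕ) < (j : ℕ) := hl
        omega))
  refine ⟨seq (N + 1), fun i => ?_⟩
  rw [hstep]
  exact hc i _ _ (fun l hl => hstable N l l.isLt)

/-- The abstract triangularity principle behind Proposition 6.9(1) of the paper: let
`F : Π i, U i → Π i, V i` be a map of triangular form `F(x)_i = A_i(x_i) + P_i((x_j)_{j<i})`,
where the `A_i` are linear maps between finite-dimensional spaces of equal dimension and each
`P_i` depends only on the coordinates of index `< i`.  Then `F` is injective iff it is
surjective, and `F` is bijective iff every `A_i` is bijective. -/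
theorem triangular_injective_iff_surjective
    (k : Type*) [Field k] (N : ℕ)
    (U V : Fin N → Type*)
    [∀ i, AddCommGroup (U i)] [∀ i, Module k (U i)]
    [∀ i, AddCommGroup (V i)] [∀ i, Module k (V i)]
    [∀ i, FiniteDimensional k (U i)] [∀ i, FiniteDimensional k (V i)]
    (hdim : ∀ i, Module.finrank k (U i) = Module.finrank k (V i))
    (F : (∀ i, U i) → (∀ i, V i))
    (A : ∀ i, U i →ₗ[k] V i)
    (P : ∀ i : Fin N, (∀ j, U j) → V i)
    (hP : ∀ i : Fin N, ∀ x y : ∀ j, U j, (∀ j : Fin N, j < i → x j = y j) → P i x = P i y)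
    (hF : ∀ (x : ∀ j, U j) (i : Fin N), F x i = A i (x i) + P i x) :
    (Function.Injective F ↔ Function.Surjective F) ∧
    (Function.Bijective F ↔ ∀ i, Function.Bijective (A i)) := by
  classical
  haveI : ∀ i, Inhabited (U i) := fun i => ⟨0⟩
  -- injective iff surjective for each A i, from equal dimensions
  have hA_is : ∀ i, Function.Injective (A i) ↔ Function.Surjective (A i) := by
    intro i
    let e : V i ≃ₗ[k] U i := LinearEquiv.ofFinrankEq _ _ (hdim i).symm
    have h1 : Function.Injective (A i) ↔
        Function.Injective ((A i).comp e.toLinearMap) := by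
      constructor
      · intro h; exact h.comp e.injective
      · intro h u u' huu
        have := h (a₁ := e.symm u) (a₂ := e.symm u') (by
          simp [LinearMap.comp_apply, huu])
        simpa using congrArg e this
    have h2 : Function.Surjective (A i) ↔
        Function.Surjective ((A i).comp e.toLinearMap) := by
      constructor
      · intro h v
        obtain ⟨u, hu⟩ := h v
        exact ⟨e.symm u, by simp [LinearMap.comp_apply, hu]⟩
      · intro h v
        obtain ⟨w, hw⟩ := h v
        exact ⟨e w, hw⟩
    rw [h1, h2]
    exact LinearMap.injective_iff_surjective
  -- (a) all A i bijective → F bijective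
  have hbij_F : (∀ i, Function.Bijective (A i)) → Function.Bijective F := by
    intro hbA
    constructor
    · intro x y hxy
      have key : ∀ m, ∀ i : Fin N, (i : ℕ) < m → x i = y i := by
        intro m
        induction m with
        | zero => intro i hi; omega
        | succ m ih =>
          intro i hi
          have hFi : A i (x i) + P i x = A i (y i) + P i y := by
            rw [← hF, ← hF, hxy]
          have hPxy : P i x = P i y := hP i x y (fun j hj => ih j (by
            have : (j : ℕ) < (i : ℕ) := hj
            omega))
          rw [hPxy] at hFi
          exact (hbA i).1 (by exact add_right_cancel hFi)
      funext i
      exact key N i i.isLt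
    · intro t
      set e : ∀ i, U i ≃ₗ[k] V i := fun i => LinearEquiv.ofBijective (A i) (hbA i) with he
      obtain ⟨x, hx⟩ := triangular_exists_fixed
        (fun i z => (e i).symm (t i - P i z))
        (fun i z w hzw => by rw [hP i z w hzw])
      refine ⟨x, funext fun i => ?_⟩
      rw [hF, hx i]
      have : A i ((e i).symm (t i - P i x)) = t i - P i x :=
        (e i).apply_symm_apply (t i - P i x)
      rw [this]
      abel
  -- (b) F injective → each A i injective (downward induction)
  have hinjA : Function.Injective F → ∀ i, Function.Injective (A i) := by
    intro hFinj
    have key : ∀ m, ∀ i : Fin N, N - (i : ℕ) ≤ m → Function.Injective (A i) := by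
      intro m
      induction m with
      | zero => intro i hi; have := i.isLt; omega
      | succ m ih =>
        intro i hi
        rw [injective_iff_map_eq_zero]
        intro u hu
        by_contra hu0
        have hbig : ∀ j : Fin N, i < j → Function.Bijective (A j) := by
          intro j hj
          have hji : (i : ℕ) < (j : ℕ) := hj
          have hinj : Function.Injective (A j) := ih j (by omega)
          exact ⟨hinj, (hA_is j).1 hinj⟩
        set base : ∀ j, U j := Pi.single i u with hbase
        obtain ⟨y, hy⟩ := triangular_exists_fixed
          (fun j z => if h : i < j then
              (LinearEquiv.ofBijective (A j) (hbig j h)).symm (P j 0 - P j z)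
            else base j)
          (fun j z w hzw => by
            by_cases h : i < j
            · simp only [dif_pos h]
              rw [hP j z w hzw]
            · simp only [dif_neg h])
        have hyle : ∀ j : Fin N, ¬ i < j → y j = base j := by
          intro j hj; rw [hy j, dif_neg hj]
        have hylt : ∀ j : Fin N, j < i → y j = 0 := by
          intro j hj
          rw [hyle j (by exact fun h => absurd (lt_trans hj h) (lt_irrefl j)),
            hbase, Pi.single_eq_of_ne (ne_of_lt hj)]
        have hyi : y i = u := by
          rw [hyle i (lt_irrefl i), hbase, Pi.single_eq_same]
        have hFy : F y = F 0 := by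
          funext j
          rw [hF, hF]
          rcases lt_trichotomy j i with h | h | h
          · rw [hylt j h, hP j y 0 (fun l hl => hylt l (lt_trans hl h))]
            simp
          · subst h
            rw [hyi, hu, hP j y 0 (fun l hl => hylt l hl)]
            simp
          · have hyj : A j (y j) = P j 0 - P j y := by
              rw [hy j, dif_pos h]
              exact (LinearEquiv.ofBijective (A j) (hbig j h)).apply_symm_apply _
            rw [hyj]
            simp
        have : y = 0 := hFinj hFy
        exact hu0 (by rw [← hyi, this]; rfl)
    intro i
    exact key N i (by omega)
  -- (c) F surjective → each A i surjective (upward induction)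
  have hsurjA : Function.Surjective F → ∀ i, Function.Surjective (A i) := by
    intro hFsurj
    have key : ∀ m, ∀ i : Fin N, (i : ℕ) < m → Function.Surjective (A i) := by
      intro m
      induction m with
      | zero => intro i hi; omega
      | succ m ih =>
        intro i hi v
        have hsmall : ∀ j : Fin N, j < i → Function.Bijective (A j) := by
          intro j hj
          have hji : (j : ℕ) < (i : ℕ) := hj
          have hsurj : Function.Surjective (A j) := ih j (by omega)
          exact ⟨(hA_is j).2 hsurj, hsurj⟩
        set t : ∀ j, V j :=
          Function.update (fun j => if j < i then F 0 j else 0) i (v + P i 0) with ht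
        obtain ⟨x, hx⟩ := hFsurj t
        have hx0 : ∀ mm, ∀ j : Fin N, (j : ℕ) < mm → j < i → x j = 0 := by
          intro mm
          induction mm with
          | zero => intro j hj; omega
          | succ mm ih2 =>
            intro j hj hji
            have hFxj : F x j = F 0 j := by
              rw [hx, ht, Function.update_of_ne (ne_of_lt hji), if_pos hji]
            rw [hF, hF] at hFxj
            have hPx : P j x = P j 0 := hP j x 0 (fun l hl =>
              ih2 l (by
                have h1 : (l : ℕ) < (j : ℕ) := hl
                omega) (lt_trans hl hji))
            rw [hPx] at hFxj
            have := add_right_cancel hFxj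
            exact (hsmall j hji).1 this
        have hFxi : F x i = v + P i 0 := by
          rw [hx, ht, Function.update_self]
        rw [hF] at hFxi
        have hPx : P i x = P i 0 := hP i x 0 (fun l hl => hx0 N l l.isLt hl)
        rw [hPx] at hFxi
        have : A i (x i) = v := by
          have := add_right_cancel hFxi
          simpa using this
        exact ⟨x i, this⟩
    intro i
    exact key N i i.isLt
  have hAbij_of_inj : Function.Injective F → ∀ i, Function.Bijective (A i) :=
    fun h i => ⟨hinjA h i, (hA_is i).1 (hinjA h i)⟩
  have hAbij_of_surj : Function.Surjective F → ∀ i, Function.Bijective (A i) :=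
    fun h i => ⟨(hA_is i).2 (hsurjA h i), hsurjA h i⟩
  refine ⟨⟨fun h => (hbij_F (hAbij_of_inj h)).2, fun h => (hbij_F (hAbij_of_surj h)).1⟩,
    ⟨fun h => hAbij_of_inj h.1, hbij_F⟩⟩
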